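/- arXiv:1512.01952 — 4 statements merged into one kernel-verified Lean document; each statement's English description precedes it below -/
import Mathlib

section
/- Every e/e-persistent place/transition net is l/l-persistent: if a p/t-net S satisfies that for every reachable marking M and all distinct transitions a, b, Ma and Mb imply that the string ab is enabled in M, then S satisfies that for every reachable marking M and all distinct transitions a, b, if Ma and there exists u ∈ T* with the string ub enabled in M, then there exists v ∈ T* with the string avb enabled in M. -/
open Classical in
/-- The marking obtained by firing transition `a` in marking `M`:
tokens are removed from entries of `a` and added to exits of `a`. -/
noncomputable def fire {P T : Type} (Fpt : P → T → Prop) (Ftp : T → P → Prop)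
    (M : P → ℕ) (a : T) : P → ℕ :=
  fun p => M p - (if Fpt p a then 1 else 0) + (if Ftp a p then 1 else 0)

/-- Transition `a` is enabled in marking `M` (all its entries are marked). -/
def Enabled {P T : Type} (Fpt : P → T → Prop) (M : P → ℕ) (a : T) : Prop :=
  ∀ p, Fpt p a → 1 ≤ M p

/-- `Fires Fpt Ftp M w M'` means the string `w` is enabled in `M` and its
execution leads from `M` to `M'` (the predicate `M w M'`). -/
inductive Fires {P T : Type} (Fpt : P → T → Prop) (Ftp : T → P → Prop) :
    (P → ℕ) → List T → (P → ℕ) → Prop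
  | nil (M : P → ℕ) : Fires Fpt Ftp M [] M
  | cons {M M'' : P → ℕ} {a : T} {w : List T} :
      Enabled Fpt M a → Fires Fpt Ftp (fire Fpt Ftp M a) w M'' →
      Fires Fpt Ftp M (a :: w) M''

/-- The string `w` is enabled in marking `M` (the predicate `M w`). -/
def EnabledSeq {P T : Type} (Fpt : P → T → Prop) (Ftp : T → P → Prop)
    (M : P → ℕ) (w : List T) : Prop :=
  ∃ M', Fires Fpt Ftp M w M'

/-- `M` is reachable from the initial marking `M0`. -/
def Reachable {P T : Type} (Fpt : P → T → Prop) (Ftp : T → P → Prop)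
    (M0 M : P → ℕ) : Prop :=
  ∃ w : List T, Fires Fpt Ftp M0 w M


lemma fires_append {P T : Type} {Fpt : P → T → Prop} {Ftp : T → P → Prop}
    {M M' M'' : P → ℕ} {u v : List T} (h1 : Fires Fpt Ftp M u M')
    (h2 : Fires Fpt Ftp M' v M'') : Fires Fpt Ftp M (u ++ v) M'' := by
  induction h1 with
  | nil => simpa
  | cons he _ ih => exact Fires.cons he (ih h2)

lemma reachable_step {P T : Type} {Fpt : P → T → Prop} {Ftp : T → P → Prop}
    {M0 M : P → ℕ} {c : T} (h : Reachable Fpt Ftp M0 M) (hc : Enabled Fpt M c) :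
    Reachable Fpt Ftp M0 (fire Fpt Ftp M c) := by
  obtain ⟨w, hw⟩ := h
  exact ⟨w ++ [c], fires_append hw (Fires.cons hc (Fires.nil _))⟩

lemma fire_comm {P T : Type} {Fpt : P → T → Prop} {Ftp : T → P → Prop}
    {M : P → ℕ} {a c : T} (ha : Enabled Fpt M a) (hc : Enabled Fpt M c)
    (hac : Enabled Fpt (fire Fpt Ftp M a) c) (hca : Enabled Fpt (fire Fpt Ftp M c) a) :
    fire Fpt Ftp (fire Fpt Ftp M a) c = fire Fpt Ftp (fire Fpt Ftp M c) a := by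
  classical
  funext p
  have h1 := ha p
  have h2 := hc p
  have h3 := hac p
  have h4 := hca p
  simp only [fire] at h3 h4 ⊢
  have e1 : (if Fpt p a then 1 else 0) ≤ M p := by
    rcases em (Fpt p a) with h | h
    · rw [if_pos h]; exact h1 h
    · rw [if_neg h]; exact Nat.zero_le _
  have e2 : (if Fpt p c then 1 else 0) ≤ M p := by
    rcases em (Fpt p c) with h | h
    · rw [if_pos h]; exact h2 h
    · rw [if_neg h]; exact Nat.zero_le _
  have e3 : (if Fpt p c then 1 else 0) ≤
      M p - (if Fpt p a then 1 else 0) + (if Ftp a p then 1 else 0) := by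
    rcases em (Fpt p c) with h | h
    · rw [if_pos h]; exact h3 h
    · rw [if_neg h]; exact Nat.zero_le _
  have e4 : (if Fpt p a then 1 else 0) ≤
      M p - (if Fpt p c then 1 else 0) + (if Ftp c p then 1 else 0) := by
    rcases em (Fpt p a) with h | h
    · rw [if_pos h]; exact h4 h
    · rw [if_neg h]; exact Nat.zero_le _
  generalize (if Fpt p a then 1 else 0) = xa at *
  generalize (if Fpt p c then 1 else 0) = xc at *
  generalize (if Ftp a p then 1 else 0) = ya at *
  generalize (if Ftp c p then 1 else 0) = yc at *
  omega

lemma key_ll {P T : Type}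
    (Fpt : P → T → Prop) (Ftp : T → P → Prop) (M0 : P → ℕ)
    (hee : ∀ M : P → ℕ, Reachable Fpt Ftp M0 M → ∀ a b : T, a ≠ b →
      Enabled Fpt M a → Enabled Fpt M b → EnabledSeq Fpt Ftp M [a, b])
    (a b : T) (hab : a ≠ b) :
    ∀ u : List T, ∀ M : P → ℕ, Reachable Fpt Ftp M0 M → Enabled Fpt M a →
      EnabledSeq Fpt Ftp M (u ++ [b]) →
      ∃ v : List T, EnabledSeq Fpt Ftp M (a :: (v ++ [b])) := by
  intro u
  induction u with
  | nil =>
    intro M hM hEa hseq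
    obtain ⟨M', h⟩ := hseq
    cases h with
    | cons hEb _ =>
      obtain ⟨M'', h2⟩ := hee M hM a b hab hEa hEb
      exact ⟨[], M'', h2⟩
  | cons c u' ih =>
    intro M hM hEa hseq
    obtain ⟨M', h⟩ := hseq
    cases h with
    | cons hEc hrest =>
      by_cases hac : a = c
      · subst hac
        exact ⟨u', M', Fires.cons hEa hrest⟩
      · -- a ≠ c; from ee-persistence get enabledness after firing
        obtain ⟨N1, hca⟩ := hee M hM c a (fun h => hac h.symm) hEc hEa
        obtain ⟨N2, hacs⟩ := hee M hM a c hac hEa hEc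
        -- Enabled a in fire M c
        have hEca : Enabled Fpt (fire Fpt Ftp M c) a := by
          cases hca with
          | cons _ h2 => cases h2 with | cons he _ => exact he
        have hEac : Enabled Fpt (fire Fpt Ftp M a) c := by
          cases hacs with
          | cons _ h2 => cases h2 with | cons he _ => exact he
        obtain ⟨v', M'', hv'⟩ := ih (fire Fpt Ftp M c) (reachable_step hM hEc) hEca ⟨M', hrest⟩
        cases hv' with
        | cons _ hv2 =>
          have hcomm := fire_comm hEa hEc hEac hEca
          rw [← hcomm] at hv2
          exact ⟨c :: v', M'', Fires.cons hEa (Fires.cons hEac hv2)⟩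

/-- Every e/e-persistent place/transition net is l/l-persistent. -/
theorem ee_persistent_imp_ll_persistent {P T : Type} [Fintype P] [Fintype T]
    (Fpt : P → T → Prop) (Ftp : T → P → Prop) (M0 : P → ℕ)
    (hee : ∀ M : P → ℕ, Reachable Fpt Ftp M0 M → ∀ a b : T, a ≠ b →
      Enabled Fpt M a → Enabled Fpt M b → EnabledSeq Fpt Ftp M [a, b]) :
    ∀ M : P → ℕ, Reachable Fpt Ftp M0 M → ∀ a b : T, a ≠ b →
      Enabled Fpt M a → (∃ u : List T, EnabledSeq Fpt Ftp M (u ++ [b])) →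
      ∃ v : List T, EnabledSeq Fpt Ftp M (a :: (v ++ [b])) := by
  intro M hM a b hab hEa hu
  obtain ⟨u, hu⟩ := hu
  exact key_ll Fpt Ftp M0 hee a b hab u M hM hEa hu
end

section
/- For every p/t-net and every transition a ∈ T there exists a natural number k_a ∈ ℕ such that for every marking M : P → ℕ, either a is dead in M (there is no w ∈ T* with the string wa enabled in M) or a is k_a-enabled in M (there exists w ∈ T* with |w| ≤ k_a and the string wa enabled in M). -/
/-- Firing is monotone: a larger marking can fire the same word, ending larger. -/
lemma fires_mono {P T : Type} (Fpt : P → T → Prop) (Ftp : T → P → Prop)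
    {M M' N : P → ℕ} {w : List T} (hle : M ≤ M') (h : Fires Fpt Ftp M w N) :
    ∃ N', Fires Fpt Ftp M' w N' ∧ N ≤ N' := by
  induction h generalizing M' with
  | nil M => exact ⟨M', Fires.nil M', hle⟩
  | @cons M M'' b w hen hf ih =>
      have hen' : Enabled Fpt M' b := fun p hp => le_trans (hen p hp) (hle p)
      have hfire : fire Fpt Ftp M b ≤ fire Fpt Ftp M' b := by
        intro p
        have hmp : M p ≤ M' p := hle p
        simp only [fire]
        split_ifs <;> omega
      obtain ⟨N', hN', hNle⟩ := ih hfire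
      exact ⟨N', Fires.cons hen' hN', hNle⟩

lemma enabledSeq_mono {P T : Type} (Fpt : P → T → Prop) (Ftp : T → P → Prop)
    {M M' : P → ℕ} {w : List T} (hle : M ≤ M') (h : EnabledSeq Fpt Ftp M w) :
    EnabledSeq Fpt Ftp M' w := by
  obtain ⟨N, hN⟩ := h
  obtain ⟨N', hN', _⟩ := fires_mono Fpt Ftp hle hN
  exact ⟨N', hN'⟩

/-- For every transition `a` of a p/t-net there is a bound `k_a` such that in
every marking `M`, the transition `a` is either dead or `k_a`-enabled. -/
theorem exists_enabledness_bound {P T : Type} [Fintype P] [Fintype T]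
    (Fpt : P → T → Prop) (Ftp : T → P → Prop) (M0 : P → ℕ) (a : T) :
    ∃ ka : ℕ, ∀ M : P → ℕ,
      (¬ ∃ w : List T, EnabledSeq Fpt Ftp M (w ++ [a])) ∨
      (∃ w : List T, w.length ≤ ka ∧ EnabledSeq Fpt Ftp M (w ++ [a])) := by
  classical
  -- `Live M` : `a` is not dead in `M`; `En k M` : `a` is `k`-enabled in `M`.
  set Live : (P → ℕ) → Prop :=
    fun M => ∃ w : List T, EnabledSeq Fpt Ftp M (w ++ [a]) with hLive
  set En : ℕ → (P → ℕ) → Prop :=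
    fun k M => ∃ w : List T, w.length ≤ k ∧ EnabledSeq Fpt Ftp M (w ++ [a]) with hEn
  by_contra hcon
  push_neg at hcon
  -- For every `k` there is a live marking that is not `k`-enabled.
  have hk : ∀ k : ℕ, ∃ M : P → ℕ, Live M ∧ ¬ En k M := by
    intro k
    obtain ⟨M, hM1, hM2⟩ := hcon k
    exact ⟨M, hM1, fun ⟨w, h1, h2⟩ => hM2 w h1 h2⟩
  choose M hMlive hMnot using hk
  -- Replace each `M k` by a live marking below it of minimal total token count.
  have hmin : ∀ k : ℕ, ∃ N : P → ℕ, N ≤ M k ∧ Live N ∧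
      ∀ N' : P → ℕ, N' ≤ M k → Live N' → ∑ p, N p ≤ ∑ p, N' p := by
    intro k
    have hex : ∃ s : ℕ, ∃ N : P → ℕ, (N ≤ M k ∧ Live N) ∧ ∑ p, N p = s :=
      ⟨∑ p, M k p, M k, ⟨le_refl _, hMlive k⟩, rfl⟩
    obtain ⟨N, ⟨hNle, hNlive⟩, hNs⟩ := Nat.find_spec hex
    refine ⟨N, hNle, hNlive, fun N' hle' hlive' => ?_⟩
    rw [hNs]
    exact Nat.find_le ⟨N', ⟨hle', hlive'⟩, rfl⟩
  choose N hNle hNlive hNmin using hmin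
  -- Each `N k` is live but not `k`-enabled (by monotonicity).
  have hNnot : ∀ k, ¬ En k (N k) := by
    intro k hEnk
    obtain ⟨w, hw, hws⟩ := hEnk
    exact hMnot k ⟨w, hw, enabledSeq_mono Fpt Ftp (hNle k) hws⟩
  -- Each `N k` is minimal among live markings.
  have hNminimal : ∀ k (N' : P → ℕ), Live N' → N' ≤ N k → N' = N k := by
    intro k N' hlive' hle'
    have h1 : ∑ p, N k p ≤ ∑ p, N' p :=
      hNmin k N' (le_trans hle' (hNle k)) hlive'
    by_contra hne
    have : ∃ p, N' p < N k p := by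
      by_contra hall
      push_neg at hall
      exact hne (funext fun p => le_antisymm (hle' p) (hall p))
    obtain ⟨p, hp⟩ := this
    have h2 : ∑ q, N' q < ∑ q, N k q :=
      Finset.sum_lt_sum (fun q _ => hle' q) ⟨p, Finset.mem_univ p, hp⟩
    omega
  -- Dickson's lemma: extract a monotone subsequence of the `N k`.
  obtain ⟨g, hg⟩ := (Set.isPWO_of_wellQuasiOrderedLE (Set.univ : Set (P → ℕ))).exists_monotone_subseq (f := N)
    (fun n => Set.mem_univ _)
  -- By minimality the subsequence is constant equal to `N (g 0)`.
  have hconst : ∀ j : ℕ, N (g 0) = N (g j) := by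
    intro j
    exact hNminimal (g j) (N (g 0)) (hNlive (g 0)) (hg (Nat.zero_le j))
  -- `N (g 0)` is live, so it is `n`-enabled for some `n`; contradiction.
  obtain ⟨w, hw⟩ := hNlive (g 0)
  have hle : w.length ≤ g w.length := le_trans (g.strictMono.le_apply) (le_refl _)
  exact hNnot (g w.length) (by
    rw [← hconst w.length]
    exact ⟨w, hle, hw⟩)
end

section
/- For a p/t-net, distinct transitions a, b ∈ T, and k ∈ ℕ, the set X = E_a ∩ E_b ∩ (complement of E_{a(k)b}) of markings is order-convex: for all markings M, M', M'' with M ≤ M' ≤ M'' componentwise, if M ∈ X and M'' ∈ X then M' ∈ X. Here E_a (resp. E_b) is the set of markings enabling a (resp. b), and E_{a(k)b} = {M | there exists w ∈ T* with |w| ≤ k and the string awb enabled in M}. -/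
theorem Fires_mono {P T : Type} {Fpt : P → T → Prop} {Ftp : T → P → Prop}
    {M N M' : P → ℕ} {w : List T} (hle : ∀ p, M p ≤ N p)
    (h : Fires Fpt Ftp M w M') : ∃ N', (∀ p, M' p ≤ N' p) ∧ Fires Fpt Ftp N w N' := by
  induction h generalizing N with
  | nil M => exact ⟨N, hle, Fires.nil N⟩
  | cons hen _ ih =>
    rename_i M M'' a w hf
    have hen' : Enabled Fpt N a := fun p hp => le_trans (hen p hp) (hle p)
    have hfle : ∀ p, fire Fpt Ftp M a p ≤ fire Fpt Ftp N a p := by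
      intro p
      unfold fire
      have := hle p
      gcongr <;> omega
    obtain ⟨N', hN'le, hN'⟩ := ih hfle
    exact ⟨N', hN'le, Fires.cons hen' hN'⟩

/-- The set `E_a ∩ E_b ∩ (ℕ^P - E_{a(k)b})` is order-convex. -/
theorem Ea_inter_Eb_diff_Eakb_convex {P T : Type} [Fintype P] [Fintype T]
    (Fpt : P → T → Prop) (Ftp : T → P → Prop) (M0 : P → ℕ)
    (a b : T) (hab : a ≠ b) (k : ℕ) (M M' M'' : P → ℕ)
    (h1 : ∀ p, M p ≤ M' p) (h2 : ∀ p, M' p ≤ M'' p)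
    (hM : Enabled Fpt M a ∧ Enabled Fpt M b ∧
      ¬ ∃ w : List T, w.length ≤ k ∧ EnabledSeq Fpt Ftp M (a :: (w ++ [b])))
    (hM'' : Enabled Fpt M'' a ∧ Enabled Fpt M'' b ∧
      ¬ ∃ w : List T, w.length ≤ k ∧ EnabledSeq Fpt Ftp M'' (a :: (w ++ [b]))) :
    Enabled Fpt M' a ∧ Enabled Fpt M' b ∧
      ¬ ∃ w : List T, w.length ≤ k ∧ EnabledSeq Fpt Ftp M' (a :: (w ++ [b])) := by
  refine ⟨fun p hp => le_trans (hM.1 p hp) (h1 p),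
    fun p hp => le_trans (hM.2.1 p hp) (h1 p), ?_⟩
  rintro ⟨w, hw, Mf, hfires⟩
  obtain ⟨N', _, hN'⟩ := Fires_mono h2 hfires
  exact hM''.2.2 ⟨w, hw, N', hN'⟩
end

section
/- Every order-convex subset of ℕ^k is rational (semilinear): if X ⊆ (Fin k → ℕ) satisfies that for all x, y, z with x ≤ y ≤ z componentwise, x ∈ X and z ∈ X imply y ∈ X, then X is semilinear, i.e., X is a finite union of linear sets of the form b + C where b ∈ (Fin k → ℕ) and C is the additive submonoid of (Fin k → ℕ) generated by a finite set of vectors. -/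
open Set

private def nbox {k : ℕ} (b : Fin k → ℕ) (T : Finset (Fin k)) : Set (Fin k → ℕ) :=
  {v | ∀ i, (i ∈ T → b i ≤ v i) ∧ (i ∉ T → v i = b i)}

private lemma nbox_eq {k : ℕ} (b : Fin k → ℕ) (T : Finset (Fin k)) :
    nbox b T = {v : Fin k → ℕ |
      ∃ c ∈ AddSubmonoid.closure ((T.image fun i => Pi.single i 1 : Finset (Fin k → ℕ)) :
        Set (Fin k → ℕ)), v = b + c} := by
  ext v
  constructor
  · intro hv
    refine ⟨fun i => v i - b i, ?_, ?_⟩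
    · have : (fun i => v i - b i) = ∑ i : Fin k, Pi.single i (v i - b i) := by
        rw [Finset.univ_sum_single (fun i => v i - b i)]
      rw [this]
      refine AddSubmonoid.sum_mem _ fun i _ => ?_
      by_cases hi : i ∈ T
      · have : Pi.single i (v i - b i) = (v i - b i) • (Pi.single i 1 : Fin k → ℕ) := by
          ext j
          by_cases hj : j = i
          · subst hj; simp
          · simp [Pi.single_eq_of_ne hj]
        rw [this]
        exact AddSubmonoid.nsmul_mem _ (AddSubmonoid.subset_closure (by
          simp only [Finset.coe_image, Set.mem_image, Finset.mem_coe]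
          exact ⟨i, hi, rfl⟩)) _

      · have : v i - b i = 0 := by
          have := (hv i).2 hi
          omega
        rw [this]
        simp only [Pi.single_zero]
        exact AddSubmonoid.zero_mem _
    · funext i
      by_cases hi : i ∈ T
      · have := (hv i).1 hi
        simp only [Pi.add_apply]
        omega
      · have := (hv i).2 hi
        simp only [Pi.add_apply]
        omega
  · rintro ⟨c, hc, rfl⟩
    have hc0 : ∀ i ∉ T, c i = 0 := by
      induction hc using AddSubmonoid.closure_induction with
      | mem x hx =>
        simp only [Finset.coe_image, Set.mem_image, Finset.mem_coe] at hx
        obtain ⟨j, hj, rfl⟩ := hx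
        intro i hi
        refine Pi.single_eq_of_ne (fun h => ?_) 1
        subst h
        exact hi hj
      | zero => intro i _; rfl
      | add x y _ _ hx hy => intro i hi; simp [Pi.add_apply, hx i hi, hy i hi]
    intro i
    refine ⟨fun _ => le_add_right le_rfl, fun hi => ?_⟩
    simp [hc0 i hi]

/-- every element of `S` dominates a minimal element of `S`. -/
private lemma nexists_min {k : ℕ} (S : Set (Fin k → ℕ)) :
    ∀ s ∈ S, ∃ m, m ∈ S ∧ m ≤ s ∧ ∀ t ∈ S, t ≤ m → m ≤ t := by
  have key : ∀ n : ℕ, ∀ s ∈ S, (∑ i, s i) = n →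
      ∃ m, m ∈ S ∧ m ≤ s ∧ ∀ t ∈ S, t ≤ m → m ≤ t := by
    intro n
    induction n using Nat.strong_induction_on with
    | _ n ih =>
      intro s hs hsum
      by_cases hmin : ∀ t ∈ S, t ≤ s → s ≤ t
      · exact ⟨s, hs, le_rfl, hmin⟩
      · push_neg at hmin
        obtain ⟨t, ht, hts, hnst⟩ := hmin
        have hlt : (∑ i, t i) < n := by
          rw [← hsum]
          have hne : t ≠ s := fun h => hnst (h ▸ le_rfl)
          have : ∃ i, t i < s i := by
            by_contra h
            push_neg at h
            exact hnst h
          obtain ⟨i, hi⟩ := this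
          exact Finset.sum_lt_sum (fun j _ => hts j) ⟨i, Finset.mem_univ i, hi⟩
        obtain ⟨m, hm, hmt, hmmin⟩ := ih _ hlt t ht rfl
        exact ⟨m, hm, le_trans hmt hts, hmmin⟩
  intro s hs
  exact key (∑ i, s i) s hs rfl

private lemma nmin_finite {k : ℕ} (S : Set (Fin k → ℕ)) :
    {m | m ∈ S ∧ ∀ t ∈ S, t ≤ m → m ≤ t}.Finite := by
  have hpwo : Set.IsPWO {m | m ∈ S ∧ ∀ t ∈ S, t ≤ m → m ≤ t} :=
    Set.isPWO_of_wellQuasiOrderedLE _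
  refine IsAntichain.finite_of_partiallyWellOrderedOn ?_ hpwo
  intro a ha b hb hab hle
  exact hab (le_antisymm hle (hb.2 a ha.1 hle))

/-- **Every order-convex subset of ℕ^k is rational (semilinear)**: if
`X ⊆ ℕ^k` is order-convex (for all `x ≤ y ≤ z` with `x, z ∈ X`, also `y ∈ X`),
then `X` is a finite union of linear sets `b i + C i`, where each `C i` is the
additive submonoid of `ℕ^k` generated by a finite set of vectors. -/
theorem convex_subset_semilinear {k : ℕ} (X : Set (Fin k → ℕ))
    (hconv : ∀ x y z : Fin k → ℕ, x ≤ y → y ≤ z → x ∈ X → z ∈ X → y ∈ X) :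
    ∃ (n : ℕ) (b : Fin n → (Fin k → ℕ)) (C : Fin n → Finset (Fin k → ℕ)),
      X = ⋃ i : Fin n,
        {v : Fin k → ℕ |
          ∃ c ∈ AddSubmonoid.closure ((C i : Set (Fin k → ℕ))), v = b i + c} := by
  classical
  set Y : Set (Fin k → ℕ) := {v | ∀ z ∈ X, ¬ v ≤ z} with hY
  set MinX : Set (Fin k → ℕ) := {m | m ∈ X ∧ ∀ t ∈ X, t ≤ m → m ≤ t} with hMinX
  set MinY : Set (Fin k → ℕ) := {m | m ∈ Y ∧ ∀ t ∈ Y, t ≤ m → m ≤ t} with hMinY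
  have hMfin : MinX.Finite := nmin_finite X
  have hNfin : MinY.Finite := nmin_finite Y
  set Mf : Finset (Fin k → ℕ) := hMfin.toFinset
  set Nf : Finset (Fin k → ℕ) := hNfin.toFinset
  obtain ⟨B, hBpos, hB⟩ : ∃ B, 0 < B ∧ ∀ w ∈ Mf ∪ Nf, ∀ i, w i < B := by
    refine ⟨((Mf ∪ Nf).sup fun w => Finset.univ.sup w) + 1, Nat.succ_pos _, ?_⟩
    intro w hw i
    have h1 : w i ≤ Finset.univ.sup w := Finset.le_sup (Finset.mem_univ i)
    have h2 : Finset.univ.sup w ≤ (Mf ∪ Nf).sup fun w => Finset.univ.sup w :=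
      Finset.le_sup hw
    omega
  have hBM : ∀ m ∈ MinX, ∀ i, m i < B := fun m hm i =>
    hB m (Finset.mem_union_left _ (hMfin.mem_toFinset.2 hm)) i
  have hBN : ∀ n ∈ MinY, ∀ i, n i < B := fun m hm i =>
    hB m (Finset.mem_union_right _ (hNfin.mem_toFinset.2 hm)) i
  -- characterization of X
  have hchar : ∀ u, u ∈ X ↔ (∃ m ∈ MinX, m ≤ u) ∧ ∀ n ∈ MinY, ¬ n ≤ u := by
    intro u
    constructor
    · intro hu
      refine ⟨?_, ?_⟩
      · obtain ⟨m, hm, hle, hmin⟩ := nexists_min X u hu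
        exact ⟨m, ⟨hm, hmin⟩, hle⟩
      · intro n hn hle
        exact hn.1 u hu hle
    · rintro ⟨⟨m, hm, hmu⟩, hN⟩
      have : ∃ z ∈ X, u ≤ z := by
        by_contra h
        push_neg at h
        have huY : u ∈ Y := fun z hz => h z hz
        obtain ⟨n, hn, hle, hmin⟩ := nexists_min Y u huY
        exact hN n ⟨hn, hmin⟩ hle
      obtain ⟨z, hz, huz⟩ := this
      exact hconv m u z hmu huz hm.1 hz
  -- the finite family
  set P : Set ((Fin k → ℕ) × Finset (Fin k)) :=
    {p | (∀ i, p.1 i < B) ∧ p.1 ∈ X ∧ nbox p.1 p.2 ⊆ X} with hPdef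
  have hXP : X = ⋃ p ∈ P, nbox p.1 p.2 := by
    apply Set.Subset.antisymm
    · intro v hv
      set T : Finset (Fin k) := Finset.univ.filter fun i => B ≤ v i with hT
      obtain ⟨w, hwspec⟩ : ∃ w : Fin k → ℕ, ∀ i,
          w i ≤ v i ∧ w i ≤ B - 1 ∧ (v i ≤ B - 1 → w i = v i) ∧ (B - 1 ≤ v i → w i = B - 1) :=
        ⟨fun i => min (v i) (B - 1), fun i =>
          ⟨min_le_left _ _, min_le_right _ _, fun h => min_eq_left h, fun h => min_eq_right h⟩⟩
      have hwB : ∀ i, w i < B := by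
        intro i
        have h4 := (hwspec i).2.1
        omega
      have hvbox : v ∈ nbox w T := by
        intro i
        constructor
        · intro _; exact (hwspec i).1
        · intro hi
          simp only [hT, Finset.mem_filter, Finset.mem_univ, true_and, not_le] at hi
          exact ((hwspec i).2.2.1 (by omega)).symm
      have hbox : nbox w T ⊆ X := by
        intro u hu
        rw [hchar]
        obtain ⟨⟨m, hm, hmv⟩, hNv⟩ := (hchar v).1 hv
        constructor
        · refine ⟨m, hm, fun i => ?_⟩
          show m i ≤ u i
          by_cases hi : i ∈ T
          · have h1 : m i < B := hBM m hm i
            have h2 : w i ≤ u i := (hu i).1 hi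
            have h3 : B ≤ v i := by
              simp only [hT, Finset.mem_filter, Finset.mem_univ, true_and] at hi
              exact hi
            have : w i = B - 1 := (hwspec i).2.2.2 (by omega)
            omega
          · have := (hu i).2 hi
            have h2 : m i ≤ v i := hmv i
            simp only [hT, Finset.mem_filter, Finset.mem_univ, true_and, not_le] at hi
            have : w i = v i := (hwspec i).2.2.1 (by omega)
            omega
        · intro n hn hle
          have hnv := hNv n hn
          have : ∃ i, v i < n i := by
            by_contra h
            push_neg at h
            exact hnv h
          obtain ⟨i, hi⟩ := this
          have hnB : n i < B := hBN n hn i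
          have hiT : i ∉ T := by
            simp only [hT, Finset.mem_filter, Finset.mem_univ, true_and, not_le]
            omega
          have hui : u i = w i := (hu i).2 hiT
          have hwi : w i = v i := (hwspec i).2.2.1 (by omega)
          have h6 : n i ≤ u i := hle i
          omega
      have hwX : w ∈ X := hbox (fun i => ⟨fun _ => le_rfl, fun _ => rfl⟩)
      exact Set.mem_biUnion (show (w, T) ∈ P from ⟨hwB, hwX, hbox⟩) hvbox
    · intro v hv
      simp only [Set.mem_iUnion] at hv
      obtain ⟨p, hp, hv⟩ := hv
      exact hp.2.2 hv
  have hPfin : P.Finite := by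
    have h1 : {w : Fin k → ℕ | ∀ i, w i < B}.Finite := by
      have : {w : Fin k → ℕ | ∀ i, w i < B} ⊆ Set.pi Set.univ fun _ => Set.Iio B := by
        intro w hw i _
        exact hw i
      exact (Set.Finite.pi fun _ => Set.finite_Iio B).subset this
    refine ((h1.prod (Set.finite_univ (α := Finset (Fin k)))).subset ?_)
    intro p hp
    exact ⟨hp.1, Set.mem_univ _⟩
  set F : Finset ((Fin k → ℕ) × Finset (Fin k)) := hPfin.toFinset with hF
  refine ⟨F.card, fun i => (F.equivFin.symm i).val.1,
    fun i => ((F.equivFin.symm i).val.2).image fun j => Pi.single j 1, ?_⟩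
  have step1 : (⋃ i : Fin F.card,
      {v : Fin k → ℕ | ∃ c ∈ AddSubmonoid.closure
        ((((F.equivFin.symm i).val.2).image fun j => Pi.single j 1 :
          Finset (Fin k → ℕ)) : Set (Fin k → ℕ)),
        v = (F.equivFin.symm i).val.1 + c}) =
      ⋃ i : Fin F.card, nbox (F.equivFin.symm i).val.1 (F.equivFin.symm i).val.2 := by
    refine Set.iUnion_congr fun i => ?_
    rw [nbox_eq]
  rw [step1]
  have step2 : (⋃ i : Fin F.card,
      nbox (F.equivFin.symm i).val.1 (F.equivFin.symm i).val.2) =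
      ⋃ p : F, nbox p.val.1 p.val.2 :=
    F.equivFin.symm.surjective.iUnion_comp fun p => nbox p.val.1 p.val.2
  rw [step2]
  rw [hXP]
  ext v
  simp only [Set.mem_iUnion, exists_prop]
  constructor
  · rintro ⟨p, hp, hv⟩
    exact ⟨⟨p, hPfin.mem_toFinset.2 hp⟩, hv⟩
  · rintro ⟨⟨p, hp⟩, hv⟩
    exact ⟨p, hPfin.mem_toFinset.1 hp, hv⟩
end
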